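/- Let R be a Noetherian ring with a ring automorphism σ, and let Q and P be σ-semistable prime ideals of R such that there is a link Q ⇝ P. Let n ≥ 1 be an integer with σⁿ(Q) = Q and σⁿ(P) = P, and let Q⁰ = ⋂_{i=0}^{n-1} σⁱ(Q) and P⁰ = ⋂_{i=0}^{n-1} σⁱ(P) be the σ-invariant parts of Q and P. Then there is a link Q⁰ ⇝ P⁰; that is, there exists an ideal A⁰ of R with Q⁰·P⁰ ⊆ A⁰ ⊊ Q⁰ ∩ P⁰ such that (Q⁰ ∩ P⁰)/A⁰ is torsionfree as a right R/P⁰-module and as a left R/Q⁰-module. -/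

import Mathlib

variable {R : Type*}

/-- The image of a two-sided ideal under a ring automorphism `σ`
(an element is in `σ(I)` iff its preimage under `σ` is in `I`). -/
def TwoSidedIdeal.mapEquiv [Ring R] (σ : R ≃+* R) (I : TwoSidedIdeal R) : TwoSidedIdeal R :=
  I.comap (σ.symm : R ≃+* R)

/-- A two-sided ideal `P ⊊ R` is prime: whenever `a R b ⊆ P`, either `a ∈ P` or `b ∈ P`. -/
def TwoSidedIdeal.IsPrime [Ring R] (P : TwoSidedIdeal R) : Prop :=
  P ≠ ⊤ ∧ ∀ a b : R, (∀ r : R, a * r * b ∈ P) → a ∈ P ∨ b ∈ P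

/-- `g` is regular modulo `P`, i.e. the image of `g` in `R/P` is a non-zero-divisor. -/
def RegularMod [Ring R] (P : TwoSidedIdeal R) (g : R) : Prop :=
  (∀ r : R, g * r ∈ P → r ∈ P) ∧ (∀ r : R, r * g ∈ P → r ∈ P)

/-- There is a link `Q ⇝ P` via the ideal `A`: `Q·P ⊆ A ⊊ Q ∩ P` and `(Q ∩ P)/A` is
torsionfree as a right `R/P`-module and as a left `R/Q`-module. -/
def LinkVia [Ring R] (Q P A : TwoSidedIdeal R) : Prop :=
  (∀ q ∈ Q, ∀ p ∈ P, q * p ∈ A) ∧ A < Q ⊓ P ∧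
  ∀ f ∈ Q ⊓ P, f ∉ A →
    (∀ g : R, RegularMod P g → f * g ∉ A) ∧
    (∀ g : R, RegularMod Q g → g * f ∉ A)

section GoldiePrep
variable [Ring R]

/-- Left annihilator of `x` modulo the two-sided ideal `Q`, as a left ideal. -/
def lQ (Q : TwoSidedIdeal R) (x : R) : Ideal R where
  carrier := {y | y * x ∈ Q}
  add_mem' := by
    intro a b ha hb
    simpa [add_mul] using Q.add_mem ha hb
  zero_mem' := by simpa using Q.zero_mem
  smul_mem' := by
    intro c y hy
    simpa [smul_eq_mul, mul_assoc] using Q.mul_mem_left c _ hy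

lemma mem_lQ {Q : TwoSidedIdeal R} {x y : R} : y ∈ lQ Q x ↔ y * x ∈ Q := Iff.rfl

/-- Utumi-style lemma: in a ring which is prime modulo `Q`, a left-multiplication-closed
set `K` not contained in `Q` contains an element which is not nilpotent modulo `Q`. -/
lemma utumi [IsNoetherianRing R] (Q : TwoSidedIdeal R) (hQ : Q.IsPrime)
    (K : Set R) (hKl : ∀ r : R, ∀ x ∈ K, r * x ∈ K)
    (hne : ∃ x ∈ K, x ∉ Q)
    (hnil : ∀ x ∈ K, ∃ m, 1 ≤ m ∧ x ^ m ∈ Q) : False := by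
  classical
  obtain ⟨M, hM, hmax⟩ := (set_has_maximal_iff_noetherian.mpr inferInstance)
      {I | ∃ x ∈ K, x ∉ Q ∧ lQ Q x = I}
      (by obtain ⟨x, hx, hxq⟩ := hne; exact ⟨lQ Q x, x, hx, hxq, rfl⟩)
  obtain ⟨a, haK, haQ, rfl⟩ := hM
  have key : ∀ r : R, a * r * a ∈ Q := by
    intro r
    by_contra hara
    have hraK : r * a ∈ K := hKl r a haK
    obtain ⟨m, hm1, hmQ⟩ := hnil _ hraK
    have shift : ∀ j : ℕ, (a * r) ^ j * a = a * (r * a) ^ j := by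
      intro j
      induction j with
      | zero => simp
      | succ j ih =>
        calc (a * r) ^ (j + 1) * a = (a * r) * ((a * r) ^ j * a) := by
              rw [pow_succ', mul_assoc]
          _ = (a * r) * (a * (r * a) ^ j) := by rw [ih]
          _ = a * ((r * a) * (r * a) ^ j) := by
              rw [mul_assoc, ← mul_assoc r a]
          _ = a * (r * a) ^ (j + 1) := by rw [← pow_succ']
    set P : ℕ → Prop := fun j => 1 ≤ j ∧ (a * r) ^ j * a ∉ Q with hP
    have hP1 : P 1 := ⟨le_refl 1, by simpa using hara⟩
    have hPm : ¬ P m := by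
      intro h
      exact h.2 (by rw [shift]; exact Q.mul_mem_left _ _ hmQ)
    set j := Nat.findGreatest P m with hj
    have hspec : P j := Nat.findGreatest_spec hm1 hP1
    have hjle : j ≤ m := Nat.findGreatest_le m
    have hjlt : j < m := lt_of_le_of_ne hjle (by intro h; exact hPm (h ▸ hspec))
    have hsucc : ¬ P (j + 1) := Nat.findGreatest_is_greatest (Nat.lt_succ_self j) hjlt
    have hsuccQ : (a * r) ^ (j + 1) * a ∈ Q := by
      by_contra hc
      exact hsucc ⟨Nat.succ_le_succ (Nat.zero_le j), hc⟩
    set d := (a * r) ^ j * a with hd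
    have hdK : d ∈ K := hKl _ a haK
    have hdQ : d ∉ Q := hspec.2
    have hle' : lQ Q a ≤ lQ Q d := by
      intro y hy
      rw [mem_lQ] at hy ⊢
      rw [hd, shift, ← mul_assoc]
      exact Q.mul_mem_right _ _ hy
    have heq : lQ Q a = lQ Q d :=
      eq_of_le_of_not_lt hle' (hmax _ ⟨d, hdK, hdQ, rfl⟩)
    have har : a * r ∈ lQ Q d := by
      rw [mem_lQ, hd, ← mul_assoc, ← pow_succ']
      exact hsuccQ
    rw [← heq, mem_lQ] at har
    exact hara har
  rcases hQ.2 a a key with h | h <;> exact haQ h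

end GoldiePrep
section GoldiePrep2
variable [Ring R]

/-- Power stabilization: if no power of `a` lies in `Q`, some power `e` of `a` satisfies
`lQ Q e = lQ Q (e*e)`. -/
lemma stab [IsNoetherianRing R] (Q : TwoSidedIdeal R) (a : R)
    (ha : ∀ m : ℕ, 1 ≤ m → a ^ m ∉ Q) :
    ∃ e : R, (∃ k, 1 ≤ k ∧ e = a ^ k) ∧ e * e ∉ Q ∧
      ∀ y : R, y * (e * e) ∈ Q → y * e ∈ Q := by
  have hmono : Monotone (fun k : ℕ => lQ Q (a ^ (k + 1))) := by
    intro i j hij y hy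
    rw [mem_lQ] at hy ⊢
    have : a ^ (j + 1) = a ^ (i + 1) * a ^ (j - i) := by
      rw [← pow_add]
      congr 1
      omega
    rw [this, ← mul_assoc]
    exact Q.mul_mem_right _ _ hy
  obtain ⟨N, hN⟩ := (monotone_stabilizes_iff_noetherian.mpr inferInstance)
    ⟨fun k : ℕ => lQ Q (a ^ (k + 1)), hmono⟩
  refine ⟨a ^ (N + 1), ⟨N + 1, by omega, rfl⟩, ?_, ?_⟩
  · rw [← pow_add]
    exact ha _ (by omega)
  · intro y hy
    rw [← pow_add] at hy
    have h1 : y ∈ lQ Q (a ^ ((2 * N + 1) + 1)) := by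
      rw [mem_lQ]
      convert hy using 3
      omega
    have h2 := hN (2 * N + 1) (by omega)
    have : y ∈ lQ Q (a ^ (N + 1)) := by
      rw [show lQ Q (a ^ (N+1)) = (⟨fun k : ℕ => lQ Q (a ^ (k + 1)), hmono⟩ : ℕ →o Ideal R) N from rfl, h2]
      exact h1
    exact this

/-- Interleaved product: an element outside a prime `J` lying in every member of a finite
family of ideals none of which is contained in `J`. -/
lemma selector (J : TwoSidedIdeal R) (hJ : J.IsPrime) (s : Finset ℕ)
    (T : ℕ → TwoSidedIdeal R) (h : ∀ k ∈ s, ¬ T k ≤ J) :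
    ∃ x : R, x ∉ J ∧ ∀ k ∈ s, x ∈ T k := by
  classical
  induction s using Finset.induction_on with
  | empty =>
    refine ⟨1, fun h1 => hJ.1 (J.eq_top h1), by simp⟩
  | @insert k s hk ih =>
    obtain ⟨x, hxJ, hxs⟩ := ih (fun m hm => h m (Finset.mem_insert_of_mem hm))
    have hk' : ¬ T k ≤ J := h k (Finset.mem_insert_self k s)
    rw [TwoSidedIdeal.le_iff, Set.not_subset] at hk'
    obtain ⟨p, hpT, hpJ⟩ := hk'
    have : ¬ ∀ r : R, x * r * p ∈ J := by
      intro hall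
      rcases hJ.2 x p hall with h | h
      · exact hxJ h
      · exact hpJ h
    push_neg at this
    obtain ⟨r, hr⟩ := this
    refine ⟨x * r * p, hr, ?_⟩
    intro m hm
    rcases Finset.mem_insert.1 hm with rfl | hm'
    · exact (T m).mul_mem_left _ _ hpT
    · exact (T m).mul_mem_right _ _ ((T m).mul_mem_right _ _ (hxs m hm'))

lemma tsi_list_sum_mem (V : TwoSidedIdeal R) :
    ∀ l : List R, (∀ a ∈ l, a ∈ V) → l.sum ∈ V := by
  intro l
  induction l with
  | nil => simp [V.zero_mem]
  | cons b tl ih =>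
    intro h
    rw [List.sum_cons]
    exact V.add_mem (h b List.mem_cons_self) (ih fun a ha => h a (List.mem_cons_of_mem _ ha))

lemma list_sum_mul_mem (Q : TwoSidedIdeal R) (a : R) :
    ∀ l : List R, (∀ b ∈ l, b * a ∈ Q) → l.sum * a ∈ Q := by
  intro l
  induction l with
  | nil => simp [Q.zero_mem]
  | cons b tl ih =>
    intro h
    rw [List.sum_cons, add_mul]
    exact Q.add_mem (h b List.mem_cons_self) (ih fun c hc => h c (List.mem_cons_of_mem _ hc))

/-- Valid families for the regular-element construction. -/
def GoodList (Q V : TwoSidedIdeal R) (L : List R) : Prop :=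
  (∀ a ∈ L, a ∈ V ∧ a * a ∉ Q ∧ ∀ y : R, y * (a * a) ∈ Q → y * a ∈ Q) ∧
  List.Pairwise (fun x y => y * x ∈ Q) L

/-- The "second annihilator" right ideal attached to a family, living in `Rᵐᵒᵖ`. -/
def RJ (Q : TwoSidedIdeal R) (L : List R) : Ideal Rᵐᵒᵖ where
  carrier := {y | ∀ x : R, (∀ a ∈ L, x * a ∈ Q) → x * y.unop ∈ Q}
  add_mem' := by
    intro u v hu hv x hx
    have := Q.add_mem (hu x hx) (hv x hx)
    simpa [mul_add] using this
  zero_mem' := by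
    intro x hx
    simpa using Q.zero_mem
  smul_mem' := by
    intro c y hy x hx
    have h1 : x * y.unop ∈ Q := hy x hx
    have : (x * y.unop) * c.unop ∈ Q := Q.mul_mem_right _ _ h1
    simpa [smul_eq_mul, mul_assoc] using this

lemma mem_RJ {Q : TwoSidedIdeal R} {L : List R} {y : Rᵐᵒᵖ} :
    y ∈ RJ Q L ↔ ∀ x : R, (∀ a ∈ L, x * a ∈ Q) → x * y.unop ∈ Q := Iff.rfl

lemma goodList_sum_ann (Q V : TwoSidedIdeal R) :
    ∀ L : List R, GoodList Q V L → ∀ x : R, x * L.sum ∈ Q → ∀ a ∈ L, x * a ∈ Q := by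
  intro L
  induction L with
  | nil => simp
  | cons a0 tl ih =>
    intro hv x hx b hb
    have hpair := hv.2
    rw [List.pairwise_cons] at hpair
    have htl : GoodList Q V tl :=
      ⟨fun a ha => hv.1 a (List.mem_cons_of_mem _ ha), hpair.2⟩
    have hsa : tl.sum * a0 ∈ Q := list_sum_mul_mem Q a0 tl hpair.1
    have hxa0 : x * a0 ∈ Q := by
      have h1 : (x * (a0 :: tl).sum) * a0 ∈ Q := Q.mul_mem_right _ _ hx
      have h2 : (x * (a0 :: tl).sum) * a0 = x * (a0 * a0) + x * (tl.sum * a0) := by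
        rw [List.sum_cons, mul_assoc, add_mul, mul_add]
      have h3 : x * (a0 * a0) ∈ Q := by
        have := Q.sub_mem h1 (Q.mul_mem_left x _ hsa)
        rw [h2] at this
        simpa using this
      exact (hv.1 a0 List.mem_cons_self).2.2 x h3
    rcases List.mem_cons.1 hb with rfl | hb'
    · exact hxa0
    · have hxtl : x * tl.sum ∈ Q := by
        have : x * (a0 :: tl).sum - x * a0 ∈ Q := Q.sub_mem hx hxa0
        rw [List.sum_cons, mul_add] at this
        simpa using this
      exact ih htl x hxtl b hb'

end GoldiePrep2
section GoldiePrep3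
variable [Ring R]

/-- Directness: relations `∑ dᵢ cⁱ ∈ Q` with coefficients in `Rz + Q` force all
coefficients into `Q`, provided `lann_Q c ⊆ Q` and `(Rz + Q) ∩ (Rc + Q) ⊆ Q`. -/
lemma dirLemma (Q : TwoSidedIdeal R) (c z : R)
    (hc : ∀ x : R, x * c ∈ Q → x ∈ Q)
    (hDE : ∀ x : R, (∃ w, x - w * z ∈ Q) → (∃ t, x - t * c ∈ Q) → x ∈ Q) :
    ∀ n : ℕ, ∀ d : ℕ → R, (∀ i, ∃ w, d i - w * z ∈ Q) →
      (∑ i ∈ Finset.range (n + 1), d i * c ^ i) ∈ Q → ∀ i ≤ n, d i ∈ Q := by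
  intro n
  induction n with
  | zero =>
    intro d hd hsum i hi
    interval_cases i
    simpa using hsum
  | succ n ih =>
    intro d hd hsum i hi
    have hsplit : (∑ i ∈ Finset.range (n + 2), d i * c ^ i)
        = (∑ i ∈ Finset.range (n + 1), d (i + 1) * c ^ i) * c + d 0 := by
      rw [Finset.sum_range_succ']
      congr 1
      · rw [Finset.sum_mul]
        refine Finset.sum_congr rfl fun i _ => ?_
        rw [pow_succ, mul_assoc]
      · simp
    set S := ∑ i ∈ Finset.range (n + 1), d (i + 1) * c ^ i with hS
    have hd0 : d 0 ∈ Q := by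
      refine hDE (d 0) (hd 0) ⟨-S, ?_⟩
      have : d 0 - (-S) * c = S * c + d 0 := by noncomm_ring
      rw [this, ← hsplit]
      exact hsum
    have hSc : S * c ∈ Q := by
      have : S * c = (∑ i ∈ Finset.range (n + 2), d i * c ^ i) - d 0 := by
        rw [hsplit]; abel
      rw [this]
      exact Q.sub_mem hsum hd0
    have hSQ : S ∈ Q := hc S hSc
    have hrec := ih (fun i => d (i + 1)) (fun i => hd (i + 1)) hSQ
    cases i with
    | zero => exact hd0
    | succ k => exact hrec k (by omega)

/-- If left multiplication by `c` is injective modulo `Q`, then `Rc + Q` is an essential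
left ideal modulo `Q`. -/
lemma ess_of_lann [IsNoetherianRing R] (Q : TwoSidedIdeal R) (c : R)
    (hc : ∀ x : R, x * c ∈ Q → x ∈ Q) :
    ∀ z : R, z ∉ Q → ∃ w t : R, w * z ∉ Q ∧ w * z - t * c ∈ Q := by
  intro z hz
  by_contra hcon
  push_neg at hcon
  have hcon' : ∀ w t : R, w * z - t * c ∈ Q → w * z ∈ Q := by
    intro w t h
    by_contra hwz
    exact hcon w t hwz h
  have hDE : ∀ x : R, (∃ w, x - w * z ∈ Q) → (∃ t, x - t * c ∈ Q) → x ∈ Q := by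
    rintro x ⟨w, hw⟩ ⟨t, ht⟩
    have h1 : w * z - t * c ∈ Q := by
      have := Q.sub_mem ht hw
      have e : x - t * c - (x - w * z) = w * z - t * c := by noncomm_ring
      rwa [e] at this
    have h2 : w * z ∈ Q := hcon' w t h1
    have : x = (x - w * z) + w * z := by noncomm_ring
    rw [this]
    exact Q.add_mem hw h2
  -- the chain of left ideals
  have hEmod : ∀ n : ℕ, ∀ x : R,
      (∃ d : ℕ → R, (∀ i, ∃ w, d i - w * z ∈ Q) ∧
        x - ∑ i ∈ Finset.range (n + 1), d i * c ^ i ∈ Q) →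
      ∀ m : ℕ, n ≤ m → (∃ d : ℕ → R, (∀ i, ∃ w, d i - w * z ∈ Q) ∧
        x - ∑ i ∈ Finset.range (m + 1), d i * c ^ i ∈ Q) := by
    rintro n x ⟨d, hd, hx⟩ m hnm
    classical
    refine ⟨fun i => if i ≤ n then d i else 0, fun i => ?_, ?_⟩
    · by_cases h : i ≤ n
      · simpa [h] using hd i
      · exact ⟨0, by simp [h, Q.zero_mem]⟩
    · have : (∑ i ∈ Finset.range (m + 1), (if i ≤ n then d i else 0) * c ^ i)
          = ∑ i ∈ Finset.range (n + 1), d i * c ^ i := by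
        rw [← Finset.sum_subset (Finset.range_subset_range.2 (by omega : n + 1 ≤ m + 1))]
        · refine Finset.sum_congr rfl fun i hi => ?_
          rw [Finset.mem_range] at hi
          simp [show i ≤ n by omega]
        · intro i _ hi
          rw [Finset.mem_range, not_lt] at hi
          simp [show ¬ i ≤ n by omega]
      rw [this]
      exact hx
  let E : ℕ →o Submodule R R :=
    ⟨fun n => {
      carrier := {x | ∃ d : ℕ → R, (∀ i, ∃ w, d i - w * z ∈ Q) ∧
        x - ∑ i ∈ Finset.range (n + 1), d i * c ^ i ∈ Q}
      add_mem' := by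
        rintro x y ⟨d, hd, hx⟩ ⟨d', hd', hy⟩
        refine ⟨fun i => d i + d' i, fun i => ?_, ?_⟩
        · obtain ⟨w, hw⟩ := hd i
          obtain ⟨w', hw'⟩ := hd' i
          refine ⟨w + w', ?_⟩
          have := Q.add_mem hw hw'
          have e : d i - w * z + (d' i - w' * z) = d i + d' i - (w + w') * z := by noncomm_ring
          rwa [e] at this
        · have e2 : (∑ i ∈ Finset.range (n + 1), (d i + d' i) * c ^ i)
              = (∑ i ∈ Finset.range (n + 1), d i * c ^ i)
                + ∑ i ∈ Finset.range (n + 1), d' i * c ^ i := by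
            simp only [add_mul]
            exact Finset.sum_add_distrib
          have hmem := Q.add_mem hx hy
          have e : (x - ∑ i ∈ Finset.range (n + 1), d i * c ^ i)
              + (y - ∑ i ∈ Finset.range (n + 1), d' i * c ^ i)
              = x + y - ((∑ i ∈ Finset.range (n + 1), d i * c ^ i)
                + ∑ i ∈ Finset.range (n + 1), d' i * c ^ i) := by abel
          rw [e] at hmem
          rw [e2]
          exact hmem
      zero_mem' := by
        refine ⟨fun _ => 0, fun i => ⟨0, by simp [Q.zero_mem]⟩, by simp [Q.zero_mem]⟩
      smul_mem' := by
        rintro r x ⟨d, hd, hx⟩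
        refine ⟨fun i => r * d i, fun i => ?_, ?_⟩
        · obtain ⟨w, hw⟩ := hd i
          refine ⟨r * w, ?_⟩
          have := Q.mul_mem_left r _ hw
          have e : r * (d i - w * z) = r * d i - r * w * z := by noncomm_ring
          rwa [e] at this
        · have e2 : (∑ i ∈ Finset.range (n + 1), (r * d i) * c ^ i)
              = r * ∑ i ∈ Finset.range (n + 1), d i * c ^ i := by
            rw [Finset.mul_sum]
            exact Finset.sum_congr rfl fun i _ => mul_assoc _ _ _
          show r • x - _ ∈ Q
          rw [smul_eq_mul, e2, ← mul_sub]
          exact Q.mul_mem_left r _ hx }, by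
        intro a b hab x hx
        exact hEmod a x hx b hab⟩
  obtain ⟨N, hN⟩ := (monotone_stabilizes_iff_noetherian.mpr inferInstance) E
  classical
  have hmem : z * c ^ (N + 1) ∈ E (N + 1) := by
    refine ⟨fun i => if i = N + 1 then z else 0, fun i => ?_, ?_⟩
    · by_cases h : i = N + 1
      · exact ⟨1, by simp [h, Q.zero_mem]⟩
      · exact ⟨0, by simp [h, Q.zero_mem]⟩
    · have : (∑ i ∈ Finset.range (N + 2), (if i = N + 1 then z else 0) * c ^ i)
          = z * c ^ (N + 1) := by
        rw [Finset.sum_eq_single (N + 1)]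
        · simp
        · intro i _ hne
          simp [hne]
        · intro h
          exact absurd (Finset.self_mem_range_succ (N + 1)) h
      rw [this]
      simpa using Q.zero_mem
  have hmem' : z * c ^ (N + 1) ∈ E N := by
    rw [hN (N + 1) (by omega)]
    exact hmem
  obtain ⟨d, hd, hsum⟩ := hmem'
  -- build the relation
  set d' : ℕ → R := fun i => if i = N + 1 then -z else d i with hd'
  have hd'mem : ∀ i, ∃ w, d' i - w * z ∈ Q := by
    intro i
    by_cases h : i = N + 1
    · exact ⟨-1, by simp [hd', h, Q.zero_mem]⟩
    · simpa [hd', h] using hd i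
  have hrel : (∑ i ∈ Finset.range (N + 2), d' i * c ^ i) ∈ Q := by
    rw [Finset.sum_range_succ]
    have e1 : (∑ i ∈ Finset.range (N + 1), d' i * c ^ i)
        = ∑ i ∈ Finset.range (N + 1), d i * c ^ i := by
      refine Finset.sum_congr rfl fun i hi => ?_
      rw [Finset.mem_range] at hi
      simp [hd', show i ≠ N + 1 by omega]
    rw [e1]
    have e2 : d' (N + 1) = -z := by simp [hd']
    rw [e2]
    have := Q.neg_mem hsum
    have e3 : -(z * c ^ (N + 1) - ∑ i ∈ Finset.range (N + 1), d i * c ^ i)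
        = (∑ i ∈ Finset.range (N + 1), d i * c ^ i) + (-z) * c ^ (N + 1) := by noncomm_ring
    rwa [e3] at this
  have := dirLemma Q c z hc hDE (N + 1) d' hd'mem hrel (N + 1) (le_refl _)
  have : -z ∈ Q := by
    rw [hd'] at this
    simpa using this
  exact hz (by simpa using Q.neg_mem this)

/-- No nonzero singular elements modulo a prime `Q`. -/
lemma noZ [IsNoetherianRing R] (Q : TwoSidedIdeal R) (hQ : Q.IsPrime) :
    ∀ x : R, (∀ z : R, z ∉ Q → ∃ w, w * z ∉ Q ∧ (w * z) * x ∈ Q) → x ∈ Q := by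
  intro x hx
  by_contra hxQ
  obtain ⟨M, hM, hmax⟩ := (set_has_maximal_iff_noetherian.mpr inferInstance)
      {I | ∃ y : R, y ∉ Q ∧ (∀ z : R, z ∉ Q → ∃ w, w * z ∉ Q ∧ (w * z) * y ∈ Q) ∧ lQ Q y = I}
      ⟨lQ Q x, x, hxQ, hx, rfl⟩
  obtain ⟨a, haQ, haE, rfl⟩ := hM
  have key : ∀ r : R, a * r * a ∈ Q := by
    intro r
    by_contra hara
    have harQ : a * r ∉ Q := by
      intro h
      exact hara (Q.mul_mem_right _ _ h)
    have hE : ∀ z : R, z ∉ Q → ∃ w, w * z ∉ Q ∧ (w * z) * (a * r * a) ∈ Q := by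
      intro z hz
      obtain ⟨w, hw1, hw2⟩ := haE z hz
      refine ⟨w, hw1, ?_⟩
      have : ((w * z) * a) * (r * a) ∈ Q := Q.mul_mem_right _ _ hw2
      rwa [mul_assoc (w * z) a (r * a), ← mul_assoc a r a] at this
    have hle : lQ Q a ≤ lQ Q (a * r * a) := by
      intro y hy
      rw [mem_lQ] at hy ⊢
      have : ((y * a) * r) * a ∈ Q := Q.mul_mem_right _ _ (Q.mul_mem_right _ _ hy)
      rwa [mul_assoc (y * a) r a, mul_assoc y a (r * a), ← mul_assoc a r a] at this
    have heq : lQ Q a = lQ Q (a * r * a) :=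
      eq_of_le_of_not_lt hle (hmax _ ⟨a * r * a, hara, hE, rfl⟩)
    obtain ⟨w, hw1, hw2⟩ := haE (a * r) harQ
    have hwmem : w ∈ lQ Q (a * r * a) := by
      rw [mem_lQ]
      have e : w * (a * r * a) = w * (a * r) * a := by noncomm_ring
      rw [e]
      exact hw2
    rw [← heq, mem_lQ] at hwmem
    have hwr : (w * a) * r ∈ Q := Q.mul_mem_right _ _ hwmem
    rw [mul_assoc] at hwr
    exact hw1 hwr
  rcases hQ.2 a a key with h | h <;> exact haQ h

end GoldiePrep3
section GoldieMain
variable [Ring R]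

/-- Key Goldie-type theorem: modulo a prime `Q` of a (two-sided) Noetherian ring, any
two-sided ideal `V` not contained in `Q` contains an element regular modulo `Q`. -/
lemma exists_regular [IsNoetherianRing R] [IsNoetherianRing Rᵐᵒᵖ]
    (Q V : TwoSidedIdeal R) (hQ : Q.IsPrime) (hV : ∃ v ∈ V, v ∉ Q) :
    ∃ g ∈ V, RegularMod Q g := by
  classical
  obtain ⟨v, hvV, hvQ⟩ := hV
  obtain ⟨M, hM, hmax⟩ := (set_has_maximal_iff_noetherian.mpr inferInstance)
      {I : Ideal Rᵐᵒᵖ | ∃ L : List R, GoodList Q V L ∧ RJ Q L = I}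
      ⟨RJ Q [], [], ⟨by simp, List.Pairwise.nil⟩, rfl⟩
  obtain ⟨L, hL, rfl⟩ := hM
  have hJQ : ∀ x : R, (∀ a ∈ L, x * a ∈ Q) → x ∈ Q := by
    by_contra hcon
    push_neg at hcon
    obtain ⟨j, hjJ, hjQ⟩ := hcon
    set K : Set R := {x | x ∈ V ∧ ∀ a ∈ L, x * a ∈ Q} with hK
    have hKl : ∀ r : R, ∀ x ∈ K, r * x ∈ K := by
      intro r x hx
      exact ⟨V.mul_mem_left r x hx.1, fun a ha => by
        rw [mul_assoc]; exact Q.mul_mem_left _ _ (hx.2 a ha)⟩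
    have hKne : ∃ x ∈ K, x ∉ Q := by
      have hnall : ¬ ∀ r : R, v * r * j ∈ Q := by
        intro hall
        rcases hQ.2 v j hall with h | h
        · exact hvQ h
        · exact hjQ h
      push_neg at hnall
      obtain ⟨r, hr⟩ := hnall
      refine ⟨v * r * j, ⟨V.mul_mem_right _ _ (V.mul_mem_right _ _ hvV),
        fun a ha => ?_⟩, hr⟩
      rw [mul_assoc]
      exact Q.mul_mem_left _ _ (hjJ a ha)
    have hnotnil : ¬ ∀ x ∈ K, ∃ m, 1 ≤ m ∧ x ^ m ∈ Q :=
      fun h => utumi Q hQ K hKl hKne h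
    push_neg at hnotnil
    obtain ⟨a, haK, hanil⟩ := hnotnil
    have hanil' : ∀ m : ℕ, 1 ≤ m → a ^ m ∉ Q := hanil
    obtain ⟨e, ⟨k, hk1, hek⟩, hee, hestab⟩ := stab Q a hanil'
    have hpowK : ∀ m : ℕ, a ^ (m + 1) ∈ K := by
      intro m
      induction m with
      | zero => simpa using haK
      | succ m ih =>
        have := hKl a _ ih
        rwa [← pow_succ'] at this
    have heK : e ∈ K := by
      rw [hek, show k = (k - 1) + 1 by omega]
      exact hpowK _
    have hgood : GoodList Q V (L ++ [e]) := by
      constructor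
      · intro b hb
        rcases List.mem_append.1 hb with hb | hb
        · exact hL.1 b hb
        · rw [List.mem_singleton] at hb
          subst hb
          exact ⟨heK.1, hee, hestab⟩
      · rw [List.pairwise_append]
        refine ⟨hL.2, List.pairwise_singleton _ _, ?_⟩
        intro x hx y hy
        rw [List.mem_singleton] at hy
        subst hy
        exact heK.2 x hx
    have hle2 : RJ Q L ≤ RJ Q (L ++ [e]) := by
      intro y hy x hx
      exact hy x fun a ha => hx a (List.mem_append_left _ ha)
    have hne2 : RJ Q L ≠ RJ Q (L ++ [e]) := by
      intro heq2
      have hop : (MulOpposite.op e) ∈ RJ Q (L ++ [e]) := by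
        rw [mem_RJ]
        intro x hx
        simpa using hx e (List.mem_append_right _ (List.mem_singleton_self e))
      rw [← heq2, mem_RJ] at hop
      have hmem := hop e heK.2
      simp only [MulOpposite.unop_op] at hmem
      exact hee hmem
    exact hmax _ ⟨L ++ [e], hgood, rfl⟩ (lt_of_le_of_ne hle2 hne2)
  have hsumV : L.sum ∈ V := tsi_list_sum_mem V L fun a ha => (hL.1 a ha).1
  have hlann : ∀ x : R, x * L.sum ∈ Q → x ∈ Q := by
    intro x hx
    exact hJQ x (goodList_sum_ann Q V L hL x hx)
  have hrann : ∀ x : R, L.sum * x ∈ Q → x ∈ Q := by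
    intro x hx
    refine noZ Q hQ x ?_
    intro z hz
    obtain ⟨w, t, hwz, hsub⟩ := ess_of_lann Q L.sum hlann z hz
    refine ⟨w, hwz, ?_⟩
    have h1 : (w * z - t * L.sum) * x ∈ Q := Q.mul_mem_right _ _ hsub
    have h2 : t * (L.sum * x) ∈ Q := Q.mul_mem_left _ _ hx
    have e : (w * z) * x = (w * z - t * L.sum) * x + t * (L.sum * x) := by noncomm_ring
    rw [e]
    exact Q.add_mem h1 h2
  exact ⟨L.sum, hsumV, hrann, hlann⟩

end GoldieMain
section MapEquiv
variable [Ring R]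

open TwoSidedIdeal

lemma mem_mapEquiv {σ : R ≃+* R} {I : TwoSidedIdeal R} {x : R} :
    x ∈ I.mapEquiv σ ↔ σ.symm x ∈ I :=
  TwoSidedIdeal.mem_comap (σ.symm : R ≃+* R)

lemma mapEquiv_mul (φ ψ : R ≃+* R) (I : TwoSidedIdeal R) :
    I.mapEquiv (φ * ψ) = (I.mapEquiv ψ).mapEquiv φ := by
  apply SetLike.ext
  intro x
  rw [mem_mapEquiv, mem_mapEquiv, mem_mapEquiv]
  have e : (φ * ψ).symm x = ψ.symm (φ.symm x) := rfl
  rw [e]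

lemma mapEquiv_one (I : TwoSidedIdeal R) : I.mapEquiv (1 : R ≃+* R) = I := by
  apply SetLike.ext
  intro x
  rw [mem_mapEquiv]
  rfl

lemma mapEquiv_mono {φ : R ≃+* R} {I J : TwoSidedIdeal R} (h : I ≤ J) :
    I.mapEquiv φ ≤ J.mapEquiv φ := by
  intro x hx
  have hx' : x ∈ I.mapEquiv φ := hx
  rw [mem_mapEquiv] at hx'
  show x ∈ J.mapEquiv φ
  rw [mem_mapEquiv]
  exact h hx'

lemma mapEquiv_isPrime {φ : R ≃+* R} {T : TwoSidedIdeal R} (h : T.IsPrime) :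
    (T.mapEquiv φ).IsPrime := by
  constructor
  · intro htop
    refine h.1 (T.eq_top ?_)
    have : (1 : R) ∈ T.mapEquiv φ := by rw [htop]; exact TwoSidedIdeal.mem_top R
    rw [mem_mapEquiv] at this
    simpa using this
  · intro a b hab
    have : ∀ r : R, φ.symm a * r * φ.symm b ∈ T := by
      intro r
      have := hab (φ r)
      rw [mem_mapEquiv] at this
      simpa using this
    rcases h.2 _ _ this with h' | h'
    · left; rw [mem_mapEquiv]; exact h'
    · right; rw [mem_mapEquiv]; exact h'

lemma mapEquiv_regularMod {φ : R ≃+* R} {T : TwoSidedIdeal R} {g : R}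
    (h : RegularMod (T.mapEquiv φ) g) : RegularMod T (φ.symm g) := by
  constructor
  · intro r hr
    have : g * φ r ∈ T.mapEquiv φ := by
      rw [mem_mapEquiv]
      simpa using hr
    have := h.1 (φ r) this
    rw [mem_mapEquiv] at this
    simpa using this
  · intro r hr
    have : φ r * g ∈ T.mapEquiv φ := by
      rw [mem_mapEquiv]
      simpa using hr
    have := h.2 (φ r) this
    rw [mem_mapEquiv] at this
    simpa using this

lemma mapEquiv_inf (φ : R ≃+* R) (I J : TwoSidedIdeal R) :
    (I ⊓ J).mapEquiv φ = I.mapEquiv φ ⊓ J.mapEquiv φ := by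
  apply SetLike.ext
  intro x
  rw [(TwoSidedIdeal.mem_inf (R := R)), mem_mapEquiv, mem_mapEquiv, mem_mapEquiv, (TwoSidedIdeal.mem_inf (R := R))]

lemma mapEquiv_linkVia {φ : R ≃+* R} {Q P A : TwoSidedIdeal R} (h : LinkVia Q P A) :
    LinkVia (Q.mapEquiv φ) (P.mapEquiv φ) (A.mapEquiv φ) := by
  refine ⟨?_, ?_, ?_⟩
  · intro q hq p hp
    rw [mem_mapEquiv] at hq hp ⊢
    rw [map_mul]
    exact h.1 _ hq _ hp
  · rw [← mapEquiv_inf]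
    rcases lt_iff_le_and_ne.1 h.2.1 with ⟨hle, hne⟩
    refine lt_iff_le_and_ne.2 ⟨mapEquiv_mono hle, ?_⟩
    intro heq
    refine hne ?_
    apply SetLike.ext
    intro x
    have := SetLike.ext_iff.1 heq (φ x)
    rw [mem_mapEquiv, mem_mapEquiv] at this
    simpa using this
  · intro f hf hfA
    rw [(TwoSidedIdeal.mem_inf (R := R)), mem_mapEquiv, mem_mapEquiv] at hf
    rw [mem_mapEquiv] at hfA
    have hf' : φ.symm f ∈ Q ⊓ P := (TwoSidedIdeal.mem_inf (R := R)).2 hf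
    constructor
    · intro g hg
      intro hmem
      rw [mem_mapEquiv, map_mul] at hmem
      exact (h.2.2 _ hf' hfA).1 (φ.symm g) (mapEquiv_regularMod hg) hmem
    · intro g hg
      intro hmem
      rw [mem_mapEquiv, map_mul] at hmem
      exact (h.2.2 _ hf' hfA).2 (φ.symm g) (mapEquiv_regularMod hg) hmem

lemma tsi_mem_iInf' {ι : Sort*} {f : ι → TwoSidedIdeal R} {x : R} :
    x ∈ (⨅ i, f i) ↔ ∀ i, x ∈ f i := by
  rw [iInf, TwoSidedIdeal.mem_sInf]
  constructor
  · intro h i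
    exact h _ ⟨i, rfl⟩
  · rintro h _ ⟨i, rfl⟩
    exact h i

lemma tsi_mem_biInf {s : Finset ℕ} {f : ℕ → TwoSidedIdeal R} {x : R} :
    x ∈ (⨅ i ∈ s, f i) ↔ ∀ i ∈ s, x ∈ f i := by
  simp only [tsi_mem_iInf']

/-- Orbit rigidity: inclusions between the `σ`-translates of an `n`-periodic ideal are
equalities. -/
lemma orbit_eq (σ : R ≃+* R) (T : TwoSidedIdeal R) (n : ℕ) (hn : 1 ≤ n)
    (hTn : T.mapEquiv (σ ^ n) = T) {i j : ℕ} (hi : i < n) (hj : j < n)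
    (hle : T.mapEquiv (σ ^ i) ≤ T.mapEquiv (σ ^ j)) :
    T.mapEquiv (σ ^ i) = T.mapEquiv (σ ^ j) := by
  have hmul : ∀ k : ℕ, T.mapEquiv (σ ^ (k * n)) = T := by
    intro k
    induction k with
    | zero => simpa using mapEquiv_one T
    | succ k ih =>
      have : σ ^ ((k + 1) * n) = σ ^ (k * n) * σ ^ n := by
        rw [← pow_add]
        congr 1
        ring
      rw [this, mapEquiv_mul, hTn, ih]
  set m := n - j + i with hm
  have hWle : T.mapEquiv (σ ^ m) ≤ T := by
    have h1 := mapEquiv_mono (φ := σ ^ (n - j)) hle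
    rw [← mapEquiv_mul, ← mapEquiv_mul, ← pow_add, ← pow_add] at h1
    rw [show n - j + j = n by omega] at h1
    rw [hTn] at h1
    exact h1
  have hdesc : ∀ k : ℕ, T.mapEquiv (σ ^ ((k + 1) * m)) ≤ T.mapEquiv (σ ^ (k * m)) := by
    intro k
    induction k with
    | zero => simpa [mapEquiv_one] using hWle
    | succ k ih =>
      have h1 := mapEquiv_mono (φ := σ ^ m) ih
      rw [← mapEquiv_mul, ← mapEquiv_mul, ← pow_add, ← pow_add] at h1
      rw [show m + (k + 1) * m = (k + 2) * m by ring] at h1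
      rw [show m + k * m = (k + 1) * m by ring] at h1
      exact h1
  have hchain : ∀ k : ℕ, 1 ≤ k → T.mapEquiv (σ ^ (k * m)) ≤ T.mapEquiv (σ ^ m) := by
    intro k
    induction k with
    | zero => omega
    | succ k ih =>
      intro _
      rcases Nat.eq_zero_or_pos k with rfl | hk
      · simp
      · exact le_trans (hdesc k) (ih hk)
  have hTm : T.mapEquiv (σ ^ m) = T := by
    refine le_antisymm hWle ?_
    have h1 := hchain n hn
    rw [mul_comm n m] at h1
    rw [hmul m] at h1
    exact h1
  -- conclude
  have h2 : T.mapEquiv (σ ^ (j + m)) = T.mapEquiv (σ ^ j) := by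
    rw [pow_add, mapEquiv_mul, hTm]
  have h3 : j + m = n + i := by omega
  have h4 : T.mapEquiv (σ ^ (n + i)) = T.mapEquiv (σ ^ i) := by
    rw [show n + i = i + n by omega, pow_add, mapEquiv_mul, hTn]
  rw [h3, h4] at h2
  exact h2

end MapEquiv
section RegInf
variable [Ring R]

/-- An element regular modulo the invariant part `T⁰` is regular modulo each translate. -/
lemma reg_of_reg_inf (σ : R ≃+* R) (T : TwoSidedIdeal R) (hT : T.IsPrime)
    (n : ℕ) (hn : 1 ≤ n) (hTn : T.mapEquiv (σ ^ n) = T)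
    {g : R} (hg : RegularMod (⨅ i ∈ Finset.range n, T.mapEquiv (σ ^ i)) g) :
    ∀ j < n, RegularMod (T.mapEquiv (σ ^ j)) g := by
  intro j hj
  classical
  set T0 := ⨅ i ∈ Finset.range n, T.mapEquiv (σ ^ i) with hT0
  have hTj : (T.mapEquiv (σ ^ j)).IsPrime := mapEquiv_isPrime hT
  have hT0le : T0 ≤ T.mapEquiv (σ ^ j) := by
    rw [hT0]
    exact biInf_le _ (Finset.mem_range.2 hj)
  set s : Finset ℕ :=
    (Finset.range n).filter (fun k => T.mapEquiv (σ ^ k) ≠ T.mapEquiv (σ ^ j)) with hs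
  have hsel : ∀ k ∈ s, ¬ T.mapEquiv (σ ^ k) ≤ T.mapEquiv (σ ^ j) := by
    intro k hk hle
    rw [hs, Finset.mem_filter] at hk
    exact hk.2 (orbit_eq σ T n hn hTn (Finset.mem_range.1 hk.1) hj hle)
  obtain ⟨x, hxJ, hxs⟩ := selector (T.mapEquiv (σ ^ j)) hTj s (fun k => T.mapEquiv (σ ^ k)) hsel
  constructor
  · intro r hr
    have hall : ∀ y : R, r * y * x ∈ T.mapEquiv (σ ^ j) := by
      intro y
      have hmem : g * (r * y * x) ∈ T0 := by
        rw [hT0, tsi_mem_biInf]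
        intro i hi
        by_cases hik : T.mapEquiv (σ ^ i) = T.mapEquiv (σ ^ j)
        · rw [hik]
          have e : g * (r * y * x) = ((g * r) * y) * x := by noncomm_ring
          rw [e]
          exact (T.mapEquiv (σ ^ j)).mul_mem_right _ _
            ((T.mapEquiv (σ ^ j)).mul_mem_right _ _ hr)
        · have hin : x ∈ T.mapEquiv (σ ^ i) :=
            hxs i (by rw [hs, Finset.mem_filter]; exact ⟨hi, hik⟩)
          have e : g * (r * y * x) = (g * (r * y)) * x := by noncomm_ring
          rw [e]
          exact (T.mapEquiv (σ ^ i)).mul_mem_left _ _ hin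
      exact hT0le (hg.1 _ hmem)
    rcases hTj.2 r x hall with h | h
    · exact h
    · exact absurd h hxJ
  · intro r hr
    have hall : ∀ y : R, x * y * r ∈ T.mapEquiv (σ ^ j) := by
      intro y
      have hmem : (x * y * r) * g ∈ T0 := by
        rw [hT0, tsi_mem_biInf]
        intro i hi
        by_cases hik : T.mapEquiv (σ ^ i) = T.mapEquiv (σ ^ j)
        · rw [hik]
          have e : (x * y * r) * g = (x * y) * (r * g) := by noncomm_ring
          rw [e]
          exact (T.mapEquiv (σ ^ j)).mul_mem_left _ _ hr
        · have hin : x ∈ T.mapEquiv (σ ^ i) :=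
            hxs i (by rw [hs, Finset.mem_filter]; exact ⟨hi, hik⟩)
          exact (T.mapEquiv (σ ^ i)).mul_mem_right _ _
            ((T.mapEquiv (σ ^ i)).mul_mem_right _ _
              ((T.mapEquiv (σ ^ i)).mul_mem_right _ _ hin))
      exact hT0le (hg.2 _ hmem)
    rcases hTj.2 x r hall with h | h
    · exact absurd h hxJ
    · exact h

end RegInf

theorem link_induces_link_of_invariant_parts' [Ring R] [IsNoetherianRing R]
    [IsNoetherianRing Rᵐᵒᵖ] (σ : R ≃+* R) (Q P : TwoSidedIdeal R)
    (hQ : Q.IsPrime) (hP : P.IsPrime)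
    (hlink : ∃ A : TwoSidedIdeal R, LinkVia Q P A)
    (n : ℕ) (hn : 1 ≤ n)
    (hQn : TwoSidedIdeal.mapEquiv (σ ^ n) Q = Q)
    (hPn : TwoSidedIdeal.mapEquiv (σ ^ n) P = P)
    (Q0 P0 : TwoSidedIdeal R)
    (hQ0 : Q0 = ⨅ i ∈ Finset.range n, TwoSidedIdeal.mapEquiv (σ ^ i) Q)
    (hP0 : P0 = ⨅ i ∈ Finset.range n, TwoSidedIdeal.mapEquiv (σ ^ i) P) :
    ∃ A0 : TwoSidedIdeal R, LinkVia Q0 P0 A0 := by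
  classical
  obtain ⟨A, hA⟩ := hlink
  have linki : ∀ i : ℕ,
      LinkVia (Q.mapEquiv (σ ^ i)) (P.mapEquiv (σ ^ i)) (A.mapEquiv (σ ^ i)) :=
    fun i => mapEquiv_linkVia hA
  have hAle : A ≤ Q ⊓ P := le_of_lt hA.2.1
  have hAQ : A ≤ Q := le_trans hAle inf_le_left
  have hAP : A ≤ P := le_trans hAle inf_le_right
  set A0 : TwoSidedIdeal R := ⨅ i ∈ Finset.range n, A.mapEquiv (σ ^ i) with hA0
  have h0Q : Q.mapEquiv (σ ^ 0) = Q := by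
    rw [pow_zero]; exact mapEquiv_one Q
  have h0P : P.mapEquiv (σ ^ 0) = P := by
    rw [pow_zero]; exact mapEquiv_one P
  have h0A : A.mapEquiv (σ ^ 0) = A := by
    rw [pow_zero]; exact mapEquiv_one A
  have hA0leA : ∀ x : R, x ∈ A0 → x ∈ A := by
    intro x hx
    rw [hA0, tsi_mem_biInf] at hx
    have := hx 0 (Finset.mem_range.2 (by omega))
    rwa [h0A] at this
  -- witness element
  obtain ⟨f, hfQP, hfA⟩ := SetLike.exists_of_lt hA.2.1
  have hfQ : f ∈ Q := ((TwoSidedIdeal.mem_inf (R := R)).1 hfQP).1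
  have hfP : f ∈ P := ((TwoSidedIdeal.mem_inf (R := R)).1 hfQP).2
  set sQ := (Finset.range n).filter (fun k => Q.mapEquiv (σ ^ k) ≠ Q) with hsQ
  have hselQ : ∀ k ∈ sQ, ¬ Q.mapEquiv (σ ^ k) ≤ Q := by
    intro k hk hle
    rw [hsQ, Finset.mem_filter] at hk
    have := orbit_eq σ Q n hn hQn (Finset.mem_range.1 hk.1) (show 0 < n by omega)
      (by rw [h0Q]; exact hle)
    rw [h0Q] at this
    exact hk.2 this
  obtain ⟨vq, hvqQ, hvqs⟩ := selector Q hQ sQ (fun k => Q.mapEquiv (σ ^ k)) hselQ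
  obtain ⟨g, hgV, hgreg⟩ := exists_regular Q (⨅ k ∈ sQ, Q.mapEquiv (σ ^ k)) hQ
    ⟨vq, by rw [tsi_mem_biInf]; exact hvqs, hvqQ⟩
  set sP := (Finset.range n).filter (fun k => P.mapEquiv (σ ^ k) ≠ P) with hsP
  have hselP : ∀ k ∈ sP, ¬ P.mapEquiv (σ ^ k) ≤ P := by
    intro k hk hle
    rw [hsP, Finset.mem_filter] at hk
    have := orbit_eq σ P n hn hPn (Finset.mem_range.1 hk.1) (show 0 < n by omega)
      (by rw [h0P]; exact hle)
    rw [h0P] at this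
    exact hk.2 this
  obtain ⟨vp, hvpP, hvps⟩ := selector P hP sP (fun k => P.mapEquiv (σ ^ k)) hselP
  obtain ⟨h', hhV, hhreg⟩ := exists_regular P (⨅ k ∈ sP, P.mapEquiv (σ ^ k)) hP
    ⟨vp, by rw [tsi_mem_biInf]; exact hvps, hvpP⟩
  set fstar := g * f * h' with hfstar
  have hfstarQ0 : fstar ∈ Q0 := by
    rw [hQ0, tsi_mem_biInf]
    intro i hi
    by_cases hik : Q.mapEquiv (σ ^ i) = Q
    · rw [hik]
      exact Q.mul_mem_right _ _ (Q.mul_mem_left _ _ hfQ)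
    · have hgin : g ∈ Q.mapEquiv (σ ^ i) := by
        rw [tsi_mem_biInf] at hgV
        exact hgV i (by rw [hsQ, Finset.mem_filter]; exact ⟨hi, hik⟩)
      exact (Q.mapEquiv (σ ^ i)).mul_mem_right _ _
        ((Q.mapEquiv (σ ^ i)).mul_mem_right _ _ hgin)
  have hfstarP0 : fstar ∈ P0 := by
    rw [hP0, tsi_mem_biInf]
    intro i hi
    by_cases hik : P.mapEquiv (σ ^ i) = P
    · rw [hik]
      exact P.mul_mem_right _ _ (P.mul_mem_left _ _ hfP)
    · have hhin : h' ∈ P.mapEquiv (σ ^ i) := by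
        rw [tsi_mem_biInf] at hhV
        exact hhV i (by rw [hsP, Finset.mem_filter]; exact ⟨hi, hik⟩)
      exact (P.mapEquiv (σ ^ i)).mul_mem_left _ _ hhin
  have hfstarA : fstar ∉ A := by
    have h1 : g * f ∉ A := (hA.2.2 f hfQP hfA).2 g hgreg
    have h2 : g * f ∈ Q ⊓ P := (TwoSidedIdeal.mem_inf (R := R)).2
      ⟨Q.mul_mem_left _ _ hfQ, P.mul_mem_left _ _ hfP⟩
    exact (hA.2.2 _ h2 h1).1 h' hhreg
  have hfstarA0 : fstar ∉ A0 := fun hmem => hfstarA (hA0leA _ hmem)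
  have hle0 : A0 ≤ Q0 ⊓ P0 := by
    intro x hx
    have hx' : x ∈ A0 := hx
    show x ∈ Q0 ⊓ P0
    rw [TwoSidedIdeal.mem_inf (R := R)]
    rw [hA0, tsi_mem_biInf] at hx'
    constructor
    · rw [hQ0, tsi_mem_biInf]
      intro i hi
      exact (mapEquiv_mono hAQ) (hx' i hi)
    · rw [hP0, tsi_mem_biInf]
      intro i hi
      exact (mapEquiv_mono hAP) (hx' i hi)
  refine ⟨A0, ?_, ?_, ?_⟩
  · intro q hq p hp
    rw [hA0, tsi_mem_biInf]
    intro i hi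
    rw [hQ0, tsi_mem_biInf] at hq
    rw [hP0, tsi_mem_biInf] at hp
    exact (linki i).1 q (hq i hi) p (hp i hi)
  · refine lt_of_le_of_ne hle0 ?_
    intro heq
    refine hfstarA0 ?_
    rw [heq]
    rw [TwoSidedIdeal.mem_inf (R := R)]
    exact ⟨hfstarQ0, hfstarP0⟩
  · intro f0 hf0 hf0A
    have hf0Q0 : f0 ∈ Q0 := ((TwoSidedIdeal.mem_inf (R := R)).1 hf0).1
    have hf0P0 : f0 ∈ P0 := ((TwoSidedIdeal.mem_inf (R := R)).1 hf0).2
    have hex : ∃ i, i ∈ Finset.range n ∧ f0 ∉ A.mapEquiv (σ ^ i) := by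
      by_contra hc
      push_neg at hc
      refine hf0A ?_
      rw [hA0, tsi_mem_biInf]
      exact fun i hi => hc i hi
    obtain ⟨i, hi, hfAi⟩ := hex
    have hf0Qi : f0 ∈ Q.mapEquiv (σ ^ i) := by
      rw [hQ0, tsi_mem_biInf] at hf0Q0
      exact hf0Q0 i hi
    have hf0Pi : f0 ∈ P.mapEquiv (σ ^ i) := by
      rw [hP0, tsi_mem_biInf] at hf0P0
      exact hf0P0 i hi
    have hf0i : f0 ∈ Q.mapEquiv (σ ^ i) ⊓ P.mapEquiv (σ ^ i) :=
      (TwoSidedIdeal.mem_inf (R := R)).2 ⟨hf0Qi, hf0Pi⟩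
    have hA0leAi : ∀ x : R, x ∈ A0 → x ∈ A.mapEquiv (σ ^ i) := by
      intro x hx
      rw [hA0, tsi_mem_biInf] at hx
      exact hx i hi
    constructor
    · intro g0 hg0
      have hregi : RegularMod (P.mapEquiv (σ ^ i)) g0 := by
        rw [hP0] at hg0
        exact reg_of_reg_inf σ P hP n hn hPn hg0 i (Finset.mem_range.1 hi)
      intro hmem
      exact ((linki i).2.2 f0 hf0i hfAi).1 g0 hregi (hA0leAi _ hmem)
    · intro g0 hg0
      have hregi : RegularMod (Q.mapEquiv (σ ^ i)) g0 := by
        rw [hQ0] at hg0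
        exact reg_of_reg_inf σ Q hQ n hn hQn hg0 i (Finset.mem_range.1 hi)
      intro hmem
      exact ((linki i).2.2 f0 hf0i hfAi).2 g0 hregi (hA0leAi _ hmem)

/-- main theorem: a link `Q ⇝ P` of σ-semistable prime ideals of a Noetherian
ring induces a link `Q⁰ ⇝ P⁰` of their σ-invariant parts. -/
theorem link_induces_link_of_invariant_parts [Ring R] [IsNoetherianRing R]
    [IsNoetherianRing Rᵐᵒᵖ] (σ : R ≃+* R) (Q P : TwoSidedIdeal R)
    (hQ : Q.IsPrime) (hP : P.IsPrime)
    (hlink : ∃ A : TwoSidedIdeal R, LinkVia Q P A)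
    (n : ℕ) (hn : 1 ≤ n)
    (hQn : TwoSidedIdeal.mapEquiv (σ ^ n) Q = Q)
    (hPn : TwoSidedIdeal.mapEquiv (σ ^ n) P = P)
    (Q0 P0 : TwoSidedIdeal R)
    (hQ0 : Q0 = ⨅ i ∈ Finset.range n, TwoSidedIdeal.mapEquiv (σ ^ i) Q)
    (hP0 : P0 = ⨅ i ∈ Finset.range n, TwoSidedIdeal.mapEquiv (σ ^ i) P) :
    ∃ A0 : TwoSidedIdeal R, LinkVia Q0 P0 A0 := by
  exact link_induces_link_of_invariant_parts' σ Q P hQ hP hlink n hn hQn hPn Q0 P0 hQ0 hP0
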